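/- The minimizer of C(p) = S(Gp) − S(p) + E_p[f] over distributions supported within a single island of G is unique. -/

import Mathlib

open Finset Real

def isDist {X : Type*} [Fintype X] (p : X → ℝ) : Prop :=
  (∀ x, 0 ≤ p x) ∧ ∑ x, p x = 1

def isStoch {X : Type*} [Fintype X] (G : X → X → ℝ) : Prop :=
  (∀ y x, 0 ≤ G y x) ∧ ∀ x, ∑ y, G y x = 1

def push {X : Type*} [Fintype X] (G : X → X → ℝ) (p : X → ℝ) : X → ℝ :=
  fun y => ∑ x, G y x * p x

noncomputable def KL {X : Type*} [Fintype X] (p q : X → ℝ) : ℝ :=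
  ∑ x, p x * Real.log (p x / q x)

noncomputable def Ent {X : Type*} [Fintype X] (p : X → ℝ) : ℝ :=
  -∑ x, p x * Real.log (p x)

noncomputable def cost {X : Type*} [Fintype X] (G : X → X → ℝ) (f : X → ℝ) (p : X → ℝ) : ℝ :=
  Ent (push G p) - Ent p + ∑ x, p x * f x

/-- Two states are related iff they can both send probability to a common output. -/
def islandRel {X : Type*} [Fintype X] (G : X → X → ℝ) : X → X → Prop :=
  fun a b => ∃ y, 0 < G y a ∧ 0 < G y b

/-- `c` is an island of `G`: an equivalence class of the transitive (equivalence)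
closure of `islandRel G`. -/
def IsIsland {X : Type*} [Fintype X] (G : X → X → ℝ) (c : Set X) : Prop :=
  ∃ x₀, c = {x | Relation.EqvGen (islandRel G) x x₀}

lemma glb {a b : ℝ} (ha : 0 ≤ a) (hb : 0 < b) : a - b ≤ a * Real.log (a / b) := by
  rcases eq_or_lt_of_le ha with h | h
  · simp [← h]; linarith
  · have h1 : Real.log (b / a) ≤ b / a - 1 := Real.log_le_sub_one_of_pos (by positivity)
    have h2 : Real.log (a / b) = - Real.log (b / a) := by
      rw [← Real.log_inv]; congr 1; field_simp
    have h3 := mul_le_mul_of_nonneg_left h1 h.le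
    have h4 : a * (b / a) = b := by field_simp
    rw [h2]; nlinarith

lemma glb_strict {a b : ℝ} (ha : 0 < a) (hb : 0 < b) (hab : a ≠ b) :
    a - b < a * Real.log (a / b) := by
  have hba : b / a ≠ 1 := by
    intro h; apply hab; field_simp at h; linarith
  have h1 : Real.log (b / a) < b / a - 1 :=
    Real.log_lt_sub_one_of_pos (by positivity) hba
  have h2 : Real.log (a / b) = - Real.log (b / a) := by
    rw [← Real.log_inv]; congr 1; field_simp
  have h3 := mul_lt_mul_of_pos_left h1 ha
  have h4 : a * (b / a) = b := by field_simp
  rw [h2]; nlinarith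

lemma glb_eq {a b : ℝ} (ha : 0 < a) (hb : 0 < b)
    (h : a * Real.log (a / b) - a + b = 0) : a = b := by
  by_contra hab
  have := glb_strict ha hb hab
  linarith

lemma neg_mul_log_le {a b : ℝ} (ha : 0 < a) (hb : 0 ≤ b) :
    -(b * Real.log b) ≤ -(a * Real.log a) + (-(Real.log a) - 1) * (b - a) := by
  have h := glb hb ha
  rcases eq_or_lt_of_le hb with h0 | h0
  · simp [← h0]; nlinarith [h]
  · have : b * Real.log (b / a) = b * Real.log b - b * Real.log a := by
      rw [Real.log_div h0.ne' ha.ne']; ring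
    nlinarith [h]

section Rel
variable {X : Type*}

lemma islandRel_symm [Fintype X] (G : X → X → ℝ) : Symmetric (islandRel G) := by
  rintro a b ⟨y, h1, h2⟩; exact ⟨y, h2, h1⟩

lemma exists_pos_col [Fintype X] {G : X → X → ℝ} (hG : isStoch G) (x : X) :
    ∃ y, 0 < G y x := by
  by_contra h
  push_neg at h
  have : ∑ y, G y x = 0 := Finset.sum_eq_zero fun y _ => le_antisymm (h y) (hG.1 y x)
  rw [hG.2 x] at this; norm_num at this

lemma eqvGen_to_rtg {r : X → X → Prop} (hs : Symmetric r) {a b : X}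
    (h : Relation.EqvGen r a b) : Relation.ReflTransGen r a b := by
  induction h with
  | rel a b h => exact Relation.ReflTransGen.single h
  | refl => exact Relation.ReflTransGen.refl
  | symm a b h ih => haveI : Std.Symm r := ⟨fun _ _ h => hs h⟩; exact Std.Symm.symm _ _ ih
  | trans a b c h1 h2 ih1 ih2 => exact ih1.trans ih2

lemma rtg_to_eqvGen {r : X → X → Prop} {a b : X}
    (h : Relation.ReflTransGen r a b) : Relation.EqvGen r a b := by
  induction h with
  | refl => exact Relation.EqvGen.refl a
  | tail h1 h2 ih => exact ih.trans _ _ _ (Relation.EqvGen.rel _ _ h2)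

lemma rtg_boundary {r : X → X → Prop} {P : X → Prop} {a b : X}
    (h : Relation.ReflTransGen r a b) :
    P a → ¬ P b → ∃ u v, r u v ∧ P u ∧ ¬ P v ∧ Relation.ReflTransGen r a v := by
  induction h with
  | refl => intro h1 h2; exact absurd h1 h2
  | @tail u v h1 h2 ih =>
    intro hpa hpv
    by_cases hu : P u
    · exact ⟨u, v, h2, hu, hpv, h1.tail h2⟩
    · obtain ⟨u', v', h3, h4, h5, h6⟩ := ih hpa hu
      exact ⟨u', v', h3, h4, h5, h6⟩

end Rel

lemma push_nonneg {X : Type*} [Fintype X] {G : X → X → ℝ} (hG : isStoch G)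
    {p : X → ℝ} (hp : ∀ x, 0 ≤ p x) (y : X) : 0 ≤ push G p y :=
  Finset.sum_nonneg fun x _ => mul_nonneg (hG.1 y x) (hp x)

/-- Key lemma A: a minimizer of the cost over distributions supported in an island
has full support on the island. -/
lemma min_full_support {X : Type*} [Fintype X]
    (G : X → X → ℝ) (f : X → ℝ) (hG : isStoch G)
    (c : Set X) (hc : IsIsland G c)
    (p : X → ℝ) (hp : isDist p) (hps : ∀ x, p x ≠ 0 → x ∈ c)
    (hpmin : ∀ r, isDist r → (∀ x, r x ≠ 0 → x ∈ c) → cost G f p ≤ cost G f r) :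
    ∀ x ∈ c, p x ≠ 0 := by
  classical
  by_contra hcon
  push_neg at hcon
  obtain ⟨a, hac, hpa⟩ := hcon
  -- there is a point with positive mass
  have hex : ∃ b, p b ≠ 0 := by
    by_contra h
    push_neg at h
    have : (1:ℝ) = 0 := by
      rw [← hp.2]; exact Finset.sum_eq_zero fun x _ => h x
    norm_num at this
  obtain ⟨b, hpb⟩ := hex
  have hbc : b ∈ c := hps b hpb
  obtain ⟨x₀, hx₀⟩ := hc
  have hEba : Relation.EqvGen (islandRel G) b a := by
    have h1 : Relation.EqvGen (islandRel G) b x₀ := by rw [hx₀] at hbc; exact hbc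
    have h2 : Relation.EqvGen (islandRel G) a x₀ := by rw [hx₀] at hac; exact hac
    exact h1.trans _ _ _ (Relation.EqvGen.symm _ _ h2)
  have hrtg : Relation.ReflTransGen (islandRel G) b a :=
    eqvGen_to_rtg (islandRel_symm G) hEba
  obtain ⟨u, v, huv, hu, hv, hbv⟩ := rtg_boundary (P := fun x => p x ≠ 0) hrtg hpb
    (by simpa using hpa)
  push_neg at hv
  have hvc : v ∈ c := by
    rw [hx₀]
    have h1 : Relation.EqvGen (islandRel G) b v := rtg_to_eqvGen hbv
    have h2 : Relation.EqvGen (islandRel G) b x₀ := by rw [hx₀] at hbc; exact hbc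
    exact (Relation.EqvGen.symm _ _ h1).trans _ _ _ h2
  obtain ⟨ys, hyu, hyv⟩ := huv
  set α := G ys v with hα_def
  have hα : 0 < α := hyv
  have hpu : 0 < p u := lt_of_le_of_ne (hp.1 u) (Ne.symm hu)
  have hGpy : 0 < push G p ys := by
    have h1 : G ys u * p u ≤ push G p ys :=
      Finset.single_le_sum (fun x _ => mul_nonneg (hG.1 ys x) (hp.1 x)) (mem_univ u)
    exact lt_of_lt_of_le (mul_pos hyu hpu) h1
  -- the perturbation family
  set r : ℝ → X → ℝ := fun t x => (1 - t) * p x + t * (if x = v then 1 else 0) with hr_def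
  set s0 := ∑ x, p x * Real.log (p x) with hs0
  set CA := ∑ y, (if 0 < push G p y then
      (-(Real.log (push G p y)) - 1) * (G y v - push G p y)
      else -(G y v * Real.log (G y v))) with hCA
  set β := ∑ y, (if 0 < push G p y then 0 else G y v) with hβ
  set C := CA - s0 + f v - (∑ x, p x * f x) with hC
  -- β ≤ 1 - α
  have hβle : β ≤ 1 - α := by
    have h1 : ∀ y ∈ Finset.univ, (if 0 < push G p y then 0 else G y v) ≤
        G y v - (if y = ys then G y v else 0) := by
      intro y _
      by_cases hy : y = ys
      · subst hy; rw [if_pos hGpy, if_pos rfl]; simp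
      · rw [if_neg hy]
        by_cases h2 : 0 < push G p y
        · rw [if_pos h2]; simpa using hG.1 y v
        · rw [if_neg h2]; simp
    calc β ≤ ∑ y, (G y v - (if y = ys then G y v else 0)) := Finset.sum_le_sum h1
      _ = (∑ y, G y v) - ∑ y, (if y = ys then G y v else 0) := Finset.sum_sub_distrib _ _
      _ = 1 - α := by rw [hG.2 v, Finset.sum_ite_eq' Finset.univ ys (fun y => G y v)]
                      simp [hα_def]
  -- now the main estimate for t ∈ (0,1)
  have hpv : p v = 0 := hv
  have key : ∀ t : ℝ, 0 < t → t < 1 →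
      cost G f (r t) - cost G f p ≤ α * (t * Real.log t) + t * C := by
    intro t ht0 ht1
    have h1t : (0:ℝ) < 1 - t := by linarith
    have hr_v : r t v = t := by simp [hr_def, hpv]
    have hr_ne : ∀ x, x ≠ v → r t x = (1 - t) * p x := by
      intro x hx; simp [hr_def, hx]
    -- entropy of r t
    have hEntr : ∑ x, r t x * Real.log (r t x)
        = t * Real.log t + (1 - t) * Real.log (1 - t) + (1 - t) * s0 := by
      rw [← Finset.sum_erase_add Finset.univ _ (mem_univ v)]
      have h2 : ∀ x ∈ Finset.univ.erase v,
          r t x * Real.log (r t x)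
          = (1 - t) * Real.log (1 - t) * p x + (1 - t) * (p x * Real.log (p x)) := by
        intro x hx
        have hxv : x ≠ v := Finset.ne_of_mem_erase hx
        rw [hr_ne x hxv]
        by_cases hpx : p x = 0
        · simp [hpx]
        · rw [Real.log_mul h1t.ne' hpx]; ring
      rw [Finset.sum_congr rfl h2, hr_v]
      rw [Finset.sum_add_distrib, ← Finset.mul_sum, ← Finset.mul_sum]
      have h3 : ∑ x ∈ Finset.univ.erase v, p x = 1 := by
        have := Finset.sum_erase_add Finset.univ p (mem_univ v)
        rw [hp.2, hpv] at this; linarith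
      have h4 : ∑ x ∈ Finset.univ.erase v, p x * Real.log (p x) = s0 := by
        have := Finset.sum_erase_add Finset.univ (fun x => p x * Real.log (p x))
          (mem_univ v)
        simp only [hpv, zero_mul, Real.log_zero, mul_zero, add_zero] at this
        rw [this, hs0]
      rw [h3, h4]; ring
    -- linear term
    have hLin : ∑ x, r t x * f x = (1 - t) * (∑ x, p x * f x) + t * f v := by
      have h2 : ∀ x ∈ Finset.univ, r t x * f x
          = (1 - t) * (p x * f x) + t * (if x = v then f x else 0) := by
        intro x _
        by_cases hx : x = v
        · subst hx; simp [hr_def, hpv]; try ring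
        · simp [hr_def, hx]; ring
      rw [Finset.sum_congr rfl h2, Finset.sum_add_distrib, ← Finset.mul_sum,
        ← Finset.mul_sum, Finset.sum_ite_eq' Finset.univ v f]
      simp
    -- push of r t
    have hpush : ∀ y, push G (r t) y = (1 - t) * push G p y + t * G y v := by
      intro y
      simp only [push]
      have h2 : ∀ x ∈ Finset.univ, G y x * r t x
          = (1 - t) * (G y x * p x) + t * (if x = v then G y x else 0) := by
        intro x _
        by_cases hx : x = v
        · subst hx; simp [hr_def, hpv]; try ring
        · simp [hr_def, hx]; ring
      rw [Finset.sum_congr rfl h2, Finset.sum_add_distrib, ← Finset.mul_sum,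
        ← Finset.mul_sum, Finset.sum_ite_eq' Finset.univ v (fun x => G y x)]
      simp
    -- termwise entropy bound for the push
    have htermwise : ∀ y ∈ Finset.univ,
        -(push G (r t) y * Real.log (push G (r t) y)) ≤
        -(push G p y * Real.log (push G p y))
          + t * (if 0 < push G p y then
              (-(Real.log (push G p y)) - 1) * (G y v - push G p y)
              else -(G y v * Real.log (G y v)))
          + (-(t * Real.log t)) * (if 0 < push G p y then 0 else G y v) := by
      intro y _
      by_cases hy : 0 < push G p y
      · rw [if_pos hy, if_pos hy]
        have hb : 0 ≤ push G (r t) y := by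
          rw [hpush y]
          have := push_nonneg hG hp.1 y
          have := hG.1 y v
          nlinarith
        have h2 := neg_mul_log_le hy hb
        have h3 : push G (r t) y - push G p y = t * (G y v - push G p y) := by
          rw [hpush y]; ring
        rw [h3] at h2
        calc -(push G (r t) y * Real.log (push G (r t) y))
            ≤ -(push G p y * Real.log (push G p y))
              + (-(Real.log (push G p y)) - 1) * (t * (G y v - push G p y)) := h2
          _ = _ := by ring
      · rw [if_neg hy, if_neg hy]
        have hy0 : push G p y = 0 := le_antisymm (not_lt.1 hy) (push_nonneg hG hp.1 y)
        have hpr : push G (r t) y = t * G y v := by rw [hpush y, hy0]; ring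
        rw [hpr, hy0]
        by_cases hgy : G y v = 0
        · simp [hgy]
        · have hgy' : 0 < G y v := lt_of_le_of_ne (hG.1 y v) (Ne.symm hgy)
          rw [Real.log_mul ht0.ne' hgy]
          ring_nf
          nlinarith [le_refl (t * G y v * Real.log (G y v))]
    have hEntPush : ∑ y, -(push G (r t) y * Real.log (push G (r t) y)) ≤
        (∑ y, -(push G p y * Real.log (push G p y))) + t * CA + (-(t * Real.log t)) * β := by
      calc ∑ y, -(push G (r t) y * Real.log (push G (r t) y))
          ≤ ∑ y, (-(push G p y * Real.log (push G p y))
            + t * (if 0 < push G p y then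
                (-(Real.log (push G p y)) - 1) * (G y v - push G p y)
                else -(G y v * Real.log (G y v)))
            + (-(t * Real.log t)) * (if 0 < push G p y then 0 else G y v)) :=
            Finset.sum_le_sum htermwise
        _ = _ := by
            rw [Finset.sum_add_distrib, Finset.sum_add_distrib, ← Finset.mul_sum,
              ← Finset.mul_sum]
    -- put things together
    have hcost_r : cost G f (r t) = (∑ y, -(push G (r t) y * Real.log (push G (r t) y)))
        + (∑ x, r t x * Real.log (r t x)) + ∑ x, r t x * f x := by
      simp only [cost, Ent]
      rw [← Finset.sum_neg_distrib]
      ring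
    have hcost_p : cost G f p = (∑ y, -(push G p y * Real.log (push G p y)))
        + s0 + ∑ x, p x * f x := by
      simp only [cost, Ent, hs0]
      rw [← Finset.sum_neg_distrib]
      ring
    have hlog1t : (1 - t) * Real.log (1 - t) ≤ 0 :=
      mul_nonpos_of_nonneg_of_nonpos h1t.le (Real.log_nonpos (by linarith) (by linarith))
    have htlogt : t * Real.log t ≤ 0 :=
      mul_nonpos_of_nonneg_of_nonpos ht0.le (Real.log_nonpos ht0.le ht1.le)
    have hβim : (1 - β) * (t * Real.log t) ≤ α * (t * Real.log t) := by
      apply mul_le_mul_of_nonpos_right _ htlogt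
      linarith
    calc cost G f (r t) - cost G f p
        ≤ ((∑ y, -(push G p y * Real.log (push G p y))) + t * CA + (-(t * Real.log t)) * β
            + (t * Real.log t + (1 - t) * Real.log (1 - t) + (1 - t) * s0)
            + ((1 - t) * (∑ x, p x * f x) + t * f v))
          - ((∑ y, -(push G p y * Real.log (push G p y))) + s0 + ∑ x, p x * f x) := by
          rw [hcost_r, hcost_p, hEntr, hLin]
          gcongr
      _ = (1 - β) * (t * Real.log t) + (1 - t) * Real.log (1 - t) + t * C := by
          simp only [hC]; ring
      _ ≤ α * (t * Real.log t) + t * C := by linarith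
  -- choose a small t
  set t := min (1/2 : ℝ) (Real.exp (-(|C| + 1) / α)) with ht_def
  have ht0 : 0 < t := lt_min (by norm_num) (Real.exp_pos _)
  have ht1 : t < 1 := lt_of_le_of_lt (min_le_left _ _) (by norm_num)
  have hlogt : Real.log t ≤ -(|C| + 1) / α := by
    calc Real.log t ≤ Real.log (Real.exp (-(|C| + 1) / α)) :=
          Real.log_le_log ht0 (min_le_right _ _)
      _ = -(|C| + 1) / α := Real.log_exp _
  have hbound : α * (t * Real.log t) + t * C ≤ -t := by
    have h1 : α * Real.log t ≤ -(|C| + 1) := by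
      have := mul_le_mul_of_nonneg_left hlogt hα.le
      calc α * Real.log t ≤ α * (-(|C| + 1) / α) := this
        _ = -(|C| + 1) := by field_simp
    have h2 : α * (t * Real.log t) = t * (α * Real.log t) := by ring
    rw [h2]
    have h3 : t * (α * Real.log t) ≤ t * (-(|C| + 1)) :=
      mul_le_mul_of_nonneg_left h1 ht0.le
    have h4 : C ≤ |C| := le_abs_self C
    nlinarith
  have hrt_dist : isDist (r t) := by
    constructor
    · intro x
      have := hp.1 x
      by_cases hx : x = v
      · subst hx; simp [hr_def, hpv]; linarith
      · simp [hr_def, hx]; nlinarith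
    · have : ∑ x, r t x = (1 - t) * (∑ x, p x) + t * ∑ x, (if x = v then (1:ℝ) else 0) := by
        simp only [hr_def]
        rw [Finset.sum_add_distrib, ← Finset.mul_sum, ← Finset.mul_sum]
      rw [this, hp.2, Finset.sum_ite_eq' Finset.univ v (fun _ => (1:ℝ))]
      simp
  have hrt_supp : ∀ x, r t x ≠ 0 → x ∈ c := by
    intro x hx
    by_cases hxv : x = v
    · subst hxv; exact hvc
    · apply hps
      intro hpx
      apply hx
      simp [hr_def, hxv, hpx]
  have hmin := hpmin (r t) hrt_dist hrt_supp
  have hkey := key t ht0 ht1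
  linarith

/-- Data-processing inequality for KL with equality condition. -/
lemma kl_contraction {X : Type*} [Fintype X] (G : X → X → ℝ) (hG : isStoch G)
    (u w : X → ℝ) (hu : ∀ x, 0 ≤ u x) (hw : ∀ x, 0 ≤ w x)
    (hsupp : ∀ x, u x ≠ 0 → w x ≠ 0) :
    KL (push G u) (push G w) ≤ KL u w ∧
    (KL (push G u) (push G w) = KL u w →
      ∀ y x, 0 < G y x → u x ≠ 0 →
        u x = (push G u y / push G w y) * w x) := by
  classical
  set μ : X → ℝ := fun y => push G u y / push G w y with hμ
  set T : X → X → ℝ := fun y x =>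
    G y x * (u x * Real.log (u x / w x) - u x * Real.log (μ y) - u x + μ y * w x) with hT
  -- support propagation for pushforwards
  have hpw : ∀ y, push G u y ≠ 0 → push G w y ≠ 0 := by
    intro y hy
    have h1 : ∃ x, G y x * u x ≠ 0 := by
      by_contra h
      push_neg at h
      exact hy (Finset.sum_eq_zero fun x _ => h x)
    obtain ⟨x, hx⟩ := h1
    have hGx : 0 < G y x := lt_of_le_of_ne (hG.1 y x) (by intro h; exact hx (by rw [← h]; ring))
    have hux : u x ≠ 0 := by intro h; exact hx (by rw [h]; ring)
    have hwx : 0 < w x := lt_of_le_of_ne (hw x) (Ne.symm (hsupp x hux))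
    have h2 : G y x * w x ≤ push G w y :=
      Finset.single_le_sum (fun z _ => mul_nonneg (hG.1 y z) (hw z)) (mem_univ x)
    exact ne_of_gt (lt_of_lt_of_le (mul_pos hGx hwx) h2)
  -- termwise nonnegativity
  have hTnn : ∀ y x, 0 ≤ T y x := by
    intro y x
    rcases eq_or_lt_of_le (hG.1 y x) with hG0 | hG0
    · simp [hT, ← hG0]
    rcases eq_or_lt_of_le (hu x) with hu0 | hu0
    · have hμnn : 0 ≤ μ y := div_nonneg (push_nonneg hG hu y) (push_nonneg hG hw y)
      simp only [hT, ← hu0]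
      have : (0:ℝ) * Real.log (0 / w x) - 0 * Real.log (μ y) - 0 + μ y * w x
          = μ y * w x := by ring
      rw [this]
      exact mul_nonneg hG0.le (mul_nonneg hμnn (hw x))
    · have hwx : 0 < w x := lt_of_le_of_ne (hw x) (Ne.symm (hsupp x hu0.ne'))
      have hpuy : 0 < push G u y := by
        have h2 : G y x * u x ≤ push G u y :=
          Finset.single_le_sum (fun z _ => mul_nonneg (hG.1 y z) (hu z)) (mem_univ x)
        exact lt_of_lt_of_le (mul_pos hG0 hu0) h2
      have hpwy : 0 < push G w y :=
        lt_of_le_of_ne (push_nonneg hG hw y) (Ne.symm (hpw y hpuy.ne'))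
      have hμpos : 0 < μ y := div_pos hpuy hpwy
      have hinner : u x * Real.log (u x / w x) - u x * Real.log (μ y) - u x + μ y * w x
          = u x * Real.log (u x / (μ y * w x)) - u x + μ y * w x := by
        rw [Real.log_div hu0.ne' hwx.ne', Real.log_div hu0.ne' (by positivity),
          Real.log_mul hμpos.ne' hwx.ne']
        ring
      have hg := glb hu0.le (mul_pos hμpos hwx)
      simp only [hT]
      rw [hinner]
      nlinarith
  -- the identity
  have hident : ∑ y, ∑ x, T y x = KL u w - KL (push G u) (push G w) := by
    have hyterm : ∀ y, ∑ x, T y x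
        = (∑ x, G y x * (u x * Real.log (u x / w x)))
          - push G u y * Real.log (push G u y / push G w y) := by
      intro y
      have hexp : ∀ x ∈ Finset.univ, T y x
          = G y x * (u x * Real.log (u x / w x))
            - Real.log (μ y) * (G y x * u x) - (G y x * u x) + μ y * (G y x * w x) := by
        intro x _; simp only [hT]; ring
      rw [Finset.sum_congr rfl hexp]
      rw [Finset.sum_add_distrib, Finset.sum_sub_distrib, Finset.sum_sub_distrib,
        ← Finset.mul_sum, ← Finset.mul_sum]
      have h1 : ∑ x, G y x * u x = push G u y := rfl
      have h2 : ∑ x, G y x * w x = push G w y := rfl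
      rw [h1, h2]
      rcases eq_or_ne (push G w y) 0 with hw0 | hw0
      · have hu0 : push G u y = 0 := by
          by_contra h; exact (hpw y h) hw0
        simp [hμ, hw0, hu0]
      · have hμw : μ y * push G w y = push G u y := by
          simp only [hμ]; field_simp
        have hlog : Real.log (μ y) = Real.log (push G u y / push G w y) := rfl
        rw [hμw, hlog]
        ring
    rw [Finset.sum_congr rfl (fun y _ => hyterm y), Finset.sum_sub_distrib]
    have hswap : ∑ y, ∑ x, G y x * (u x * Real.log (u x / w x)) = KL u w := by
      rw [Finset.sum_comm]
      simp only [KL]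
      apply Finset.sum_congr rfl
      intro x _
      rw [← Finset.sum_mul, hG.2 x, one_mul]
    rw [hswap]
    simp only [KL]
  constructor
  · have h0 : 0 ≤ ∑ y, ∑ x, T y x :=
      Finset.sum_nonneg fun y _ => Finset.sum_nonneg fun x _ => hTnn y x
    linarith [hident]
  · intro heq y x hGx hux
    have h0 : ∑ y, ∑ x, T y x = 0 := by rw [hident, heq]; ring
    have hTy0 : ∀ y ∈ Finset.univ, ∑ x, T y x = 0 := by
      rw [← Finset.sum_eq_zero_iff_of_nonneg
        (fun y _ => Finset.sum_nonneg fun x _ => hTnn y x)]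
      exact h0
    have hT0 : T y x = 0 := by
      have := (Finset.sum_eq_zero_iff_of_nonneg (fun x _ => hTnn y x)).1
        (hTy0 y (mem_univ y)) x (mem_univ x)
      exact this
    have hu0 : 0 < u x := lt_of_le_of_ne (hu x) (Ne.symm hux)
    have hwx : 0 < w x := lt_of_le_of_ne (hw x) (Ne.symm (hsupp x hux))
    have hpuy : 0 < push G u y := by
      have h2 : G y x * u x ≤ push G u y :=
        Finset.single_le_sum (fun z _ => mul_nonneg (hG.1 y z) (hu z)) (mem_univ x)
      exact lt_of_lt_of_le (mul_pos hGx hu0) h2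
    have hpwy : 0 < push G w y :=
      lt_of_le_of_ne (push_nonneg hG hw y) (Ne.symm (hpw y hpuy.ne'))
    have hμpos : 0 < μ y := div_pos hpuy hpwy
    have hinner : u x * Real.log (u x / w x) - u x * Real.log (μ y) - u x + μ y * w x
        = u x * Real.log (u x / (μ y * w x)) - u x + μ y * w x := by
      rw [Real.log_div hu0.ne' hwx.ne', Real.log_div hu0.ne' (by positivity),
        Real.log_mul hμpos.ne' hwx.ne']
      ring
    simp only [hT] at hT0
    rw [hinner] at hT0
    have hzero : u x * Real.log (u x / (μ y * w x)) - u x + μ y * w x = 0 := by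
      rcases mul_eq_zero.1 hT0 with h | h
      · exact absurd h hGx.ne'
      · exact h
    have := glb_eq hu0 (mul_pos hμpos hwx) hzero
    simp only [hμ] at this ⊢
    linarith


lemma KL_expand {X : Type*} [Fintype X] (u w : X → ℝ)
    (hs : ∀ x, u x ≠ 0 → w x ≠ 0) :
    KL u w = (∑ x, u x * Real.log (u x)) - ∑ x, u x * Real.log (w x) := by
  rw [← Finset.sum_sub_distrib]
  apply Finset.sum_congr rfl
  intro x _
  by_cases hx : u x = 0
  · simp [hx]
  · rw [Real.log_div hx (hs x hx)]; ring

/-- the minimizer of the cost over distributions supported in a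
single island `c` is unique. -/
theorem island_minimizer_unique {X : Type*} [Fintype X]
    (G : X → X → ℝ) (f : X → ℝ) (hG : isStoch G)
    (c : Set X) (hc : IsIsland G c)
    (p q : X → ℝ) (hp : isDist p) (hq : isDist q)
    (hps : ∀ x, p x ≠ 0 → x ∈ c) (hqs : ∀ x, q x ≠ 0 → x ∈ c)
    (hpmin : ∀ r, isDist r → (∀ x, r x ≠ 0 → x ∈ c) → cost G f p ≤ cost G f r)
    (hqmin : ∀ r, isDist r → (∀ x, r x ≠ 0 → x ∈ c) → cost G f q ≤ cost G f r) :
    p = q := by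
  classical
  have hpq_cost : cost G f p = cost G f q :=
    le_antisymm (hpmin q hq hqs) (hqmin p hp hps)
  have hpfull : ∀ x ∈ c, p x ≠ 0 := min_full_support G f hG c hc p hp hps hpmin
  have hqfull : ∀ x ∈ c, q x ≠ 0 := min_full_support G f hG c hc q hq hqs hqmin
  set m : X → ℝ := fun x => (p x + q x) / 2 with hm_def
  have hm_nn : ∀ x, 0 ≤ m x := fun x => by
    have := hp.1 x; have := hq.1 x; simp only [hm_def]; linarith
  have hm_sum : ∑ x, m x = 1 := by
    simp only [hm_def]
    rw [← Finset.sum_div, Finset.sum_add_distrib, hp.2, hq.2]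
    norm_num
  have hm_dist : isDist m := ⟨hm_nn, hm_sum⟩
  have hms : ∀ x, m x ≠ 0 → x ∈ c := by
    intro x hx
    by_cases hpx : p x = 0
    · apply hqs
      intro hqx
      exact hx (by simp [hm_def, hpx, hqx])
    · exact hps x hpx
  have hm_pos : ∀ x ∈ c, 0 < m x := by
    intro x hx
    have h1 : 0 < p x := lt_of_le_of_ne (hp.1 x) (Ne.symm (hpfull x hx))
    have h2 := hq.1 x
    simp only [hm_def]; linarith
  have hsupp_pm : ∀ x, p x ≠ 0 → m x ≠ 0 := fun x hx => (hm_pos x (hps x hx)).ne'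
  have hsupp_qm : ∀ x, q x ≠ 0 → m x ≠ 0 := fun x hx => (hm_pos x (hqs x hx)).ne'
  -- pushforward of the midpoint
  have hpushm : ∀ y, push G m y = (push G p y + push G q y) / 2 := by
    intro y
    simp only [push, hm_def]
    rw [← Finset.sum_add_distrib, Finset.sum_div]
    apply Finset.sum_congr rfl
    intro x _; ring
  -- KL contraction for p and q against m
  obtain ⟨hDp_le, hDp_eq⟩ := kl_contraction G hG p m hp.1 hm_nn hsupp_pm
  obtain ⟨hDq_le, _⟩ := kl_contraction G hG q m hq.1 hm_nn hsupp_qm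
  -- cost identity pieces
  have e1 : KL p m = (∑ x, p x * Real.log (p x)) - ∑ x, p x * Real.log (m x) :=
    KL_expand p m hsupp_pm
  have e2 : KL q m = (∑ x, q x * Real.log (q x)) - ∑ x, q x * Real.log (m x) :=
    KL_expand q m hsupp_qm
  have e3 : (∑ x, p x * Real.log (m x)) + (∑ x, q x * Real.log (m x))
      = 2 * ∑ x, m x * Real.log (m x) := by
    rw [← Finset.sum_add_distrib, Finset.mul_sum]
    apply Finset.sum_congr rfl
    intro x _; simp only [hm_def]; ring
  have hsupp_Ppm : ∀ y, push G p y ≠ 0 → push G m y ≠ 0 := by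
    intro y hy
    have h1 : 0 < push G p y := lt_of_le_of_ne (push_nonneg hG hp.1 y) (Ne.symm hy)
    have h2 : 0 ≤ push G q y := push_nonneg hG hq.1 y
    rw [hpushm y]; positivity
  have hsupp_Pqm : ∀ y, push G q y ≠ 0 → push G m y ≠ 0 := by
    intro y hy
    have h1 : 0 < push G q y := lt_of_le_of_ne (push_nonneg hG hq.1 y) (Ne.symm hy)
    have h2 : 0 ≤ push G p y := push_nonneg hG hp.1 y
    rw [hpushm y]; positivity
  have e4 : KL (push G p) (push G m)
      = (∑ y, push G p y * Real.log (push G p y))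
        - ∑ y, push G p y * Real.log (push G m y) :=
    KL_expand _ _ hsupp_Ppm
  have e5 : KL (push G q) (push G m)
      = (∑ y, push G q y * Real.log (push G q y))
        - ∑ y, push G q y * Real.log (push G m y) :=
    KL_expand _ _ hsupp_Pqm
  have e6 : (∑ y, push G p y * Real.log (push G m y))
        + (∑ y, push G q y * Real.log (push G m y))
      = 2 * ∑ y, push G m y * Real.log (push G m y) := by
    rw [← Finset.sum_add_distrib, Finset.mul_sum]
    apply Finset.sum_congr rfl
    intro y _
    rw [hpushm y]; ring
  have hLm : ∑ x, m x * f x = ((∑ x, p x * f x) + ∑ x, q x * f x) / 2 := by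
    rw [← Finset.sum_add_distrib, Finset.sum_div]
    apply Finset.sum_congr rfl
    intro x _; simp only [hm_def]; ring
  have hcost_m : cost G f m
      = -(∑ y, push G m y * Real.log (push G m y)) + (∑ x, m x * Real.log (m x))
        + ((∑ x, p x * f x) + (∑ x, q x * f x)) / 2 := by
    simp only [cost, Ent]
    rw [hLm]; ring
  have hcost_p : cost G f p
      = -(∑ y, push G p y * Real.log (push G p y)) + (∑ x, p x * Real.log (p x))
        + ∑ x, p x * f x := by
    simp only [cost, Ent]; ring
  have hcost_q : cost G f q
      = -(∑ y, push G q y * Real.log (push G q y)) + (∑ x, q x * Real.log (q x))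
        + ∑ x, q x * f x := by
    simp only [cost, Ent]; ring
  have hmin_m : cost G f p ≤ cost G f m := hpmin m hm_dist hms
  -- conclude equality in the data-processing inequality for p vs m
  have hDp_zero : KL (push G p) (push G m) = KL p m := by
    have hsum : (KL p m - KL (push G p) (push G m))
        + (KL q m - KL (push G q) (push G m)) ≤ 0 := by
      have : cost G f p + cost G f q - 2 * cost G f m ≤ 0 := by linarith
      rw [hcost_p, hcost_q, hcost_m] at this
      linarith [e1, e2, e3, e4, e5, e6]
    linarith
  have hkey := hDp_eq hDp_zero
  -- ratio propagation along the island
  obtain ⟨x₀, hx₀⟩ := hc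
  have hprop : ∀ a b, Relation.EqvGen (islandRel G) a b →
      ((a ∈ c ↔ b ∈ c) ∧ (a ∈ c → p a * m b = p b * m a)) := by
    intro a b h
    induction h with
    | rel a b h =>
      obtain ⟨y, hya, hyb⟩ := h
      have hmem : a ∈ c ↔ b ∈ c := by
        rw [hx₀]
        constructor
        · intro ha
          exact (Relation.EqvGen.rel _ _ ⟨y, hyb, hya⟩).trans _ _ _ ha
        · intro hb
          exact (Relation.EqvGen.rel _ _ ⟨y, hya, hyb⟩).trans _ _ _ hb
      refine ⟨hmem, fun ha => ?_⟩
      have hb : b ∈ c := hmem.1 ha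
      have h1 : p a = (push G p y / push G m y) * m a := hkey y a hya (hpfull a ha)
      have h2 : p b = (push G p y / push G m y) * m b := hkey y b hyb (hpfull b hb)
      rw [h1, h2]; ring
    | refl a => exact ⟨Iff.rfl, fun _ => rfl⟩
    | symm a b h ih =>
      refine ⟨ih.1.symm, fun hb => ?_⟩
      have := ih.2 (ih.1.symm.1 hb)
      linarith
    | trans a b d h1 h2 ih1 ih2 =>
      refine ⟨ih1.1.trans ih2.1, fun ha => ?_⟩
      have hb : b ∈ c := ih1.1.1 ha
      have hab := ih1.2 ha
      have hbd := ih2.2 hb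
      have hmb : 0 < m b := hm_pos b hb
      have h3 : (p a * m d) * m b = (p d * m a) * m b := by
        calc (p a * m d) * m b = (p a * m b) * m d := by ring
          _ = (p b * m a) * m d := by rw [hab]
          _ = (p b * m d) * m a := by ring
          _ = (p d * m b) * m a := by rw [hbd]
          _ = (p d * m a) * m b := by ring
      exact mul_right_cancel₀ hmb.ne' h3
  have hx₀c : x₀ ∈ c := by rw [hx₀]; exact Relation.EqvGen.refl x₀
  have hratio : ∀ x, p x * m x₀ = p x₀ * m x := by
    intro x
    by_cases hx : x ∈ c
    · have hEq : Relation.EqvGen (islandRel G) x x₀ := by rw [hx₀] at hx; exact hx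
      exact (hprop x x₀ hEq).2 hx
    · have h1 : p x = 0 := by
        by_contra h; exact hx (hps x h)
      have h2 : m x = 0 := by
        by_contra h; exact hx (hms x h)
      rw [h1, h2]; ring
  have hsum_ratio : m x₀ = p x₀ := by
    have h1 : ∑ x, p x * m x₀ = ∑ x, p x₀ * m x := Finset.sum_congr rfl fun x _ => hratio x
    rw [← Finset.sum_mul, ← Finset.mul_sum, hp.2, hm_sum] at h1
    linarith
  have hpx₀ : p x₀ ≠ 0 := hpfull x₀ hx₀c
  have hpm : ∀ x, p x = m x := by
    intro x
    have := hratio x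
    rw [hsum_ratio] at this
    exact mul_right_cancel₀ hpx₀ (by linarith [this])
  funext x
  have := hpm x
  simp only [hm_def] at this
  linarith
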